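/- Let β be a quadratic Pisot unit, root of x² - ax - 1, and α = -β^{-1}. If x ∈ Z[β] with x < 0, then x' (the Galois conjugate in Q(α)) has exactly two weakly admissible α-adic expansions; both are eventually periodic to the left with period word a0 (i.e., of the form ^ω(a0)u•v for finite digit words u, v over {0,…,a}). -/

import Mathlib

/-- A weakly admissible α-adic expansion of y over the alphabet {0,…,a}:
digits in {0,…,a}, finitely many nonzero digits of negative index, no finite
factor lexicographically greater than d*_β(1) = (a0)^ω (equivalently a digit a
is always followed on the right by 0), with α-value y. -/
def IsAlphaAdicExpansion (a : ℕ) (α : ℝ) (f : ℤ → ℤ) (y : ℝ) : Prop :=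
  (∀ i, 0 ≤ f i ∧ f i ≤ a) ∧
  (∃ k : ℤ, ∀ i, i < k → f i = 0) ∧
  (∀ i, f (i + 1) = a → f i = 0) ∧
  HasSum (fun i : ℤ => (f i : ℝ) * α ^ i) y

namespace TwoExpAux

lemma sum_Ico_top {F : ℤ → ℝ} {k N : ℤ} (h : k ≤ N) :
    ∑ i ∈ Finset.Ico k (N + 1), F i = ∑ i ∈ Finset.Ico k N, F i + F N := by
  have he : Finset.Ico k (N + 1) = insert N (Finset.Ico k N) := by
    ext i; simp only [Finset.mem_Ico, Finset.mem_insert]; omega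
  rw [he, Finset.sum_insert (by simp)]
  ring

def pm (a : ℕ) (z : ℤ × ℤ) : ℤ × ℤ := (z.2, z.1 + a * z.2)
def pu (a : ℕ) (z : ℤ × ℤ) : ℤ × ℤ := (z.2 - a * z.1, z.1)
noncomputable def ev (γ : ℝ) (z : ℤ × ℤ) : ℝ := z.1 + z.2 * γ

lemma pm_pu (a : ℕ) (z : ℤ × ℤ) : pm a (pu a z) = z := by
  simp [pm, pu]

section root
variable {a : ℕ} {γ : ℝ}

lemma ev_pm (hg : γ ^ 2 = a * γ + 1) (z : ℤ × ℤ) : ev γ (pm a z) = γ * ev γ z := by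
  simp only [ev, pm]
  push_cast
  linear_combination (-(z.2 : ℝ)) * hg

lemma ev_pu (hg : γ ^ 2 = a * γ + 1) (hγ : γ ≠ 0) (z : ℤ × ℤ) :
    ev γ (pu a z) = γ⁻¹ * ev γ z := by
  have h := ev_pm hg (pu a z)
  rw [pm_pu] at h
  rw [h]
  field_simp

lemma ev_pm_iter (hg : γ ^ 2 = a * γ + 1) (j : ℕ) (z : ℤ × ℤ) :
    ev γ ((pm a)^[j] z) = γ ^ j * ev γ z := by
  induction j with
  | zero => simp
  | succ j ih =>
    rw [Function.iterate_succ_apply', ev_pm hg, ih]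
    ring

end root

/-- The standing hypotheses. -/
def Good (a : ℕ) (β α : ℝ) : Prop :=
  0 < a ∧ β ^ 2 = (a : ℝ) * β + 1 ∧ 1 < β ∧ α = -β⁻¹

namespace Good

variable {a : ℕ} {β α : ℝ}

lemma ha (h : Good a β α) : 0 < a := h.1
lemma root (h : Good a β α) : β ^ 2 = (a : ℝ) * β + 1 := h.2.1
lemma hβ1 (h : Good a β α) : 1 < β := h.2.2.1
lemma hβ0 (h : Good a β α) : 0 < β := lt_trans one_pos h.hβ1
lemma hβne (h : Good a β α) : β ≠ 0 := ne_of_gt h.hβ0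
lemma hαdef (h : Good a β α) : α = -β⁻¹ := h.2.2.2
lemma hα0 (h : Good a β α) : α < 0 := by
  rw [h.hαdef]; simp [inv_pos.2 h.hβ0]
lemma hαne (h : Good a β α) : α ≠ 0 := ne_of_lt h.hα0
lemma hαβ (h : Good a β α) : α * β = -1 := by
  rw [h.hαdef, neg_mul, inv_mul_cancel₀ h.hβne]
lemma hαm1 (h : Good a β α) : -1 < α := by
  rw [h.hαdef]
  have : β⁻¹ < 1 := inv_lt_one_of_one_lt₀ h.hβ1
  linarith
lemma ha1 (h : Good a β α) : (1 : ℝ) ≤ (a : ℝ) := by exact_mod_cast h.ha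
lemma absum (h : Good a β α) : α + β = (a : ℝ) := by
  have hb := h.hβne
  have hr := h.root
  rw [h.hαdef]
  field_simp
  linear_combination hr
lemma αroot (h : Good a β α) : α ^ 2 = (a : ℝ) * α + 1 := by
  linear_combination α * h.absum - h.hαβ
lemma haβ (h : Good a β α) : (a : ℝ) < β := by
  nlinarith [h.absum, h.hα0]
lemma hβa1 (h : Good a β α) : β < (a : ℝ) + 1 := by
  nlinarith [h.absum, h.hαm1]
lemma αsq0 (h : Good a β α) : (0:ℝ) ≤ α ^ 2 := by positivity
lemma αsq1 (h : Good a β α) : α ^ 2 < 1 := by nlinarith [h.hα0, h.hαm1]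
lemma oneminusαsq (h : Good a β α) : 1 - α ^ 2 = -(a : ℝ) * α := by
  linear_combination -h.αroot

end Good


section Run

variable {a : ℕ} {β α : ℝ} {m n : ℤ}

/-- the pair run along digits `d`, starting at position `k` (`k ≤ 0`). -/
def run (a : ℕ) (m n : ℤ) (d : ℤ → ℤ) (k : ℤ) : ℕ → ℤ × ℤ
  | 0 => (pm a)^[(-k).toNat] (m, n)
  | j + 1 => pu a (run a m n d k j - (d (k + j), 0))

def runZ (a : ℕ) (m n : ℤ) (d : ℤ → ℤ) (k : ℤ) (N : ℤ) : ℤ × ℤ :=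
  run a m n d k (N - k).toNat

lemma runZ_base (d : ℤ → ℤ) (k : ℤ) : runZ a m n d k k = (pm a)^[(-k).toNat] (m, n) := by
  simp [runZ, run]

lemma runZ_succ (d : ℤ → ℤ) {k N : ℤ} (h : k ≤ N) :
    runZ a m n d k (N + 1) = pu a (runZ a m n d k N - (d N, 0)) := by
  have h1 : (N + 1 - k).toNat = (N - k).toNat + 1 := by omega
  have h2 : k + ((N - k).toNat : ℤ) = N := by omega
  rw [runZ, h1, run, h2, ← runZ]

lemma ev_sub_digit (γ : ℝ) (z : ℤ × ℤ) (c : ℤ) : ev γ (z - (c, 0)) = ev γ z - c := by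
  simp [ev]
  ring

lemma ev_runZ {γ : ℝ} (hg : γ ^ 2 = a * γ + 1) (hγ : γ ≠ 0) (d : ℤ → ℤ) {k : ℤ}
    (hk : k ≤ 0) : ∀ {N : ℤ}, k ≤ N →
    ev γ (runZ a m n d k N) =
      γ ^ (-N) * (((m : ℝ) + n * γ) - ∑ i ∈ Finset.Ico k N, (d i : ℝ) * γ ^ i) := by
  have key : ∀ j : ℕ, ev γ (runZ a m n d k (k + j)) =
      γ ^ (-(k + j : ℤ)) * (((m : ℝ) + n * γ) - ∑ i ∈ Finset.Ico k (k + j : ℤ), (d i : ℝ) * γ ^ i) := by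
    intro j
    induction j with
    | zero =>
      simp only [Nat.cast_zero, add_zero, Finset.Ico_self, Finset.sum_empty, sub_zero]
      rw [runZ_base, ev_pm_iter hg]
      have h2 : ((-k).toNat : ℤ) = -k := by omega
      rw [← zpow_natCast γ, h2]
      simp [ev]
    | succ j ih =>
      have hkj : k ≤ k + (j : ℤ) := by omega
      have hs : (k + (j + 1 : ℕ) : ℤ) = (k + (j : ℤ)) + 1 := by push_cast; ring
      rw [hs, runZ_succ d hkj, ev_pu hg hγ, ev_sub_digit, ih,
        sum_Ico_top (F := fun i => (d i : ℝ) * γ ^ i) hkj]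
      have hzz : γ ^ (-(k + (j : ℤ))) * γ ^ (k + (j : ℤ)) = 1 := by
        rw [← zpow_add₀ hγ, show -(k + (j:ℤ)) + (k + (j:ℤ)) = 0 by ring, zpow_zero]
      have he : γ ^ (-((k + (j : ℤ)) + 1)) = γ ^ (-(k + (j : ℤ))) * γ⁻¹ := by
        rw [show -((k + (j : ℤ)) + 1) = -(k + (j : ℤ)) + (-1) by ring, zpow_add₀ hγ,
          zpow_neg_one]
      rw [he]
      linear_combination (γ⁻¹ * (d (k + (j:ℤ)) : ℝ)) * hzz
  intro N hN
  have : N = k + ((N - k).toNat : ℤ) := by omega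
  rw [this]
  exact key (N - k).toNat

end Run

section Sums

variable {a : ℕ} {β α : ℝ}

lemma hasSum_tail {f : ℤ → ℤ} {y : ℝ} {k : ℤ}
    (hsum : HasSum (fun i : ℤ => (f i : ℝ) * α ^ i) y) (hk : ∀ i < k, f i = 0) (N : ℤ) :
    HasSum (fun j : ℕ => (f (N + j) : ℝ) * α ^ ((N : ℤ) + j))
      (y - ∑ i ∈ Finset.Ico k N, (f i : ℝ) * α ^ i) := by
  set H : ℤ → ℝ := fun i => if i < N then (f i : ℝ) * α ^ i else 0 with hH
  have hHsupp : ∀ i ∉ Finset.Ico k N, H i = 0 := by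
    intro i hi
    simp only [Finset.mem_Ico, not_and, not_lt] at hi
    by_cases h1 : i < N
    · have : i < k := by by_contra h2; exact absurd (hi (by omega)) (by omega)
      simp [hH, h1, hk i this]
    · simp [hH, h1]
  have hHsum : HasSum H (∑ i ∈ Finset.Ico k N, (f i : ℝ) * α ^ i) := by
    have := hasSum_sum_of_ne_finset_zero (L := SummationFilter.unconditional ℤ) hHsupp
    convert this using 1
    apply Finset.sum_congr rfl
    intro i hi
    simp only [Finset.mem_Ico] at hi
    simp [hH, hi.2]
  have hG := hsum.sub hHsum
  have hinj : Function.Injective (fun j : ℕ => N + (j : ℤ)) := by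
    intro x y hxy; simpa using hxy
  have hzero : ∀ x ∉ Set.range (fun j : ℕ => N + (j : ℤ)),
      (fun i : ℤ => (f i : ℝ) * α ^ i - H i) x = 0 := by
    intro x hx
    have : x < N := by
      by_contra hc
      exact hx ⟨(x - N).toNat, by simp; omega⟩
    simp [hH, this]
  have := (Function.Injective.hasSum_iff hinj hzero).mpr hG
  convert this using 2 with j
  have : ¬ (N + (j : ℤ) < N) := by omega
  simp [hH, this]

lemma hasSum_tail_scaled {f : ℤ → ℤ} {y : ℝ} {k : ℤ} (hα : α ≠ 0)
    (hsum : HasSum (fun i : ℤ => (f i : ℝ) * α ^ i) y) (hk : ∀ i < k, f i = 0) (N : ℤ) :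
    HasSum (fun j : ℕ => (f (N + j) : ℝ) * α ^ (j : ℕ))
      (α ^ (-N) * (y - ∑ i ∈ Finset.Ico k N, (f i : ℝ) * α ^ i)) := by
  have h := (hasSum_tail hsum hk N).mul_left (α ^ (-N))
  have h1 : α ^ (-N) * α ^ (N : ℤ) = 1 := by rw [← zpow_add₀ hα]; simp
  have he : (fun j : ℕ => α ^ (-N) * ((f (N + j) : ℝ) * α ^ ((N : ℤ) + j))) =
      (fun j : ℕ => (f (N + j) : ℝ) * α ^ (j : ℕ)) := by
    funext j
    rw [zpow_add₀ hα, zpow_natCast α j]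
    linear_combination ((f (N + (j:ℤ)) : ℝ) * α ^ j) * h1
  rwa [he] at h

end Sums


section Envelopes

variable {a : ℕ} {β α : ℝ}

lemma evenSum (h : Good a β α) :
    HasSum (fun j : ℕ => if Even j then (a : ℝ) * α ^ j else 0) β := by
  have hg : HasSum (fun t : ℕ => (α ^ 2) ^ t) (1 - α ^ 2)⁻¹ :=
    hasSum_geometric_of_lt_one h.αsq0 h.αsq1
  have hg2 := hg.mul_left (a : ℝ)
  have hinj : Function.Injective (fun t : ℕ => 2 * t) := fun x y hxy => by
    simpa using hxy
  have hzero : ∀ x ∉ Set.range (fun t : ℕ => 2 * t),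
      (fun j : ℕ => if Even j then (a : ℝ) * α ^ j else 0) x = 0 := by
    intro x hx
    have hne : ¬ Even x := by
      rintro ⟨t, ht⟩; exact hx ⟨t, by simp; omega⟩
    simp [hne]
  have hcomp : ((fun j : ℕ => if Even j then (a : ℝ) * α ^ j else 0) ∘ (fun t : ℕ => 2 * t)) =
      (fun t : ℕ => (a : ℝ) * (α ^ 2) ^ t) := by
    funext t
    have hev : Even (2 * t) := even_two_mul t
    simp [Function.comp, hev, pow_mul]
  have key := (Function.Injective.hasSum_iff hinj hzero).mp (by rw [hcomp]; exact hg2)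
  have ha0 : (a:ℝ) ≠ 0 := by
    have := h.ha1; linarith
  have h1 : -α = β⁻¹ := by rw [h.hαdef]; ring
  have hval : (a : ℝ) * (1 - α ^ 2)⁻¹ = β := by
    rw [h.oneminusαsq, show -(a:ℝ) * α = (a:ℝ) * (-α) by ring, h1, mul_inv, inv_inv,
      ← mul_assoc, mul_inv_cancel₀ ha0, one_mul]
  rwa [hval] at key

lemma oddSum (h : Good a β α) :
    HasSum (fun j : ℕ => if Even j then 0 else (a : ℝ) * α ^ j) (-1) := by
  have hg : HasSum (fun t : ℕ => (α ^ 2) ^ t) (1 - α ^ 2)⁻¹ :=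
    hasSum_geometric_of_lt_one h.αsq0 h.αsq1
  have hg2 := hg.mul_left ((a : ℝ) * α)
  have hinj : Function.Injective (fun t : ℕ => 2 * t + 1) := fun x y hxy => by
    simpa using hxy
  have hzero : ∀ x ∉ Set.range (fun t : ℕ => 2 * t + 1),
      (fun j : ℕ => if Even j then 0 else (a : ℝ) * α ^ j) x = 0 := by
    intro x hx
    have hev : Even x := by
      rcases Nat.even_or_odd x with he | ho
      · exact he
      · rcases ho with ⟨t, ht⟩; exact absurd ⟨t, by simp; omega⟩ hx
    simp [hev]
  have hcomp : ((fun j : ℕ => if Even j then 0 else (a : ℝ) * α ^ j) ∘ (fun t : ℕ => 2 * t + 1)) =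
      (fun t : ℕ => (a : ℝ) * α * (α ^ 2) ^ t) := by
    funext t
    have hodd : ¬ Even (2 * t + 1) := by simp [Nat.even_add_one, Nat.even_iff, Nat.mul_mod]
    simp only [Function.comp, hodd, if_false, pow_succ, pow_mul]
    ring
  have key := (Function.Injective.hasSum_iff hinj hzero).mp (by rw [hcomp]; exact hg2)
  have hval : (a : ℝ) * α * (1 - α ^ 2)⁻¹ = -1 := by
    have hne2 : (a:ℝ) * α ≠ 0 := by
      have h1 := h.hα0
      have h2 := h.ha1
      intro hc
      nlinarith
    rw [h.oneminusαsq]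
    have : -(a:ℝ) * α = -((a:ℝ) * α) := by ring
    rw [this, inv_neg, mul_neg, mul_inv_cancel₀ hne2]
  rwa [hval] at key

/-- upper and lower bounds for the scaled tails of an expansion -/
lemma sα_bounds (h : Good a β α) {f : ℤ → ℤ} {y : ℝ} {k : ℤ}
    (hsum : HasSum (fun i : ℤ => (f i : ℝ) * α ^ i) y) (hk : ∀ i < k, f i = 0)
    (hd : ∀ i, 0 ≤ f i ∧ f i ≤ a) (N : ℤ) :
    -1 ≤ α ^ (-N) * (y - ∑ i ∈ Finset.Ico k N, (f i : ℝ) * α ^ i) ∧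
      α ^ (-N) * (y - ∑ i ∈ Finset.Ico k N, (f i : ℝ) * α ^ i) ≤ β := by
  have hts := hasSum_tail_scaled h.hαne hsum hk N
  constructor
  · refine hasSum_le (f := fun j : ℕ => if Even j then 0 else (a : ℝ) * α ^ j) ?_ (oddSum h) hts
    intro j
    by_cases hj : Even j
    · have h1 : (0:ℝ) ≤ α ^ j := Even.pow_nonneg hj α
      have h2 : (0:ℝ) ≤ (f (N + j) : ℝ) := by exact_mod_cast (hd (N + j)).1
      simp only [hj, if_true]
      positivity
    · have h1 : α ^ j ≤ 0 := Odd.pow_nonpos (Nat.odd_iff.mpr (Nat.not_even_iff.mp hj)) h.hα0.le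
      have h2 : (f (N + j) : ℝ) ≤ (a : ℝ) := by exact_mod_cast (hd (N + j)).2
      simp only [hj, if_false]
      exact mul_le_mul_of_nonpos_right h2 h1
  · refine hasSum_le (g := fun j : ℕ => if Even j then (a : ℝ) * α ^ j else 0) ?_ hts (evenSum h)
    intro j
    by_cases hj : Even j
    · have h1 : (0:ℝ) ≤ α ^ j := Even.pow_nonneg hj α
      have h2 : (f (N + j) : ℝ) ≤ (a : ℝ) := by exact_mod_cast (hd (N + j)).2
      simp only [hj, if_true]
      exact mul_le_mul_of_nonneg_right h2 h1
    · have h1 : α ^ j ≤ 0 := Odd.pow_nonpos (Nat.odd_iff.mpr (Nat.not_even_iff.mp hj)) h.hα0.le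
      have h2 : (0:ℝ) ≤ (f (N + j) : ℝ) := by exact_mod_cast (hd (N + j)).1
      simp only [hj, if_false]
      exact mul_nonpos_of_nonneg_of_nonpos h2 h1

end Envelopes

section Pattern

variable {a : ℕ} {β α : ℝ}

/-- the eventual periodic tail `0 a 0 a …` starting at position `T`. -/
def pat (a : ℕ) (T : ℤ) : ℤ → ℤ := fun i => if (i - T) % 2 = 0 then 0 else (a : ℤ)

lemma patTail_hasSum (h : Good a β α) (T : ℤ) :
    HasSum (fun j : ℕ => (pat a T (T + j) : ℝ) * α ^ ((T : ℤ) + j)) (-α ^ T) := by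
  have h2 := (oddSum h).mul_left (α ^ (T : ℤ))
  have he : (fun j : ℕ => α ^ (T:ℤ) * (if Even j then 0 else (a:ℝ) * α ^ j)) =
      (fun j : ℕ => (pat a T (T + j) : ℝ) * α ^ ((T : ℤ) + j)) := by
    funext j
    by_cases hj : Even j
    · have hz : (T + (j:ℤ) - T) % 2 = 0 := by
        rcases hj with ⟨t, ht⟩
        omega
      have hp : pat a T (T + (j:ℤ)) = 0 := by
        simp only [pat]; rw [if_pos hz]
      simp [hp, hj]
    · have hj2 : j % 2 = 1 := Nat.not_even_iff.mp hj
      have hz : ¬ ((T + (j:ℤ) - T) % 2 = 0) := by omega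
      have hp : pat a T (T + (j:ℤ)) = (a:ℤ) := by
        simp only [pat]; rw [if_neg hz]
      simp only [hp, hj, if_false]
      push_cast
      rw [zpow_add₀ h.hαne, zpow_natCast α j]
      ring
  rw [he] at h2
  rw [mul_neg_one] at h2
  exact h2

/-- a "finite word followed by the periodic tail" digit function has the expected sum. -/
lemma build_hasSum (h : Good a β α) (dd : ℤ → ℤ) {K T : ℤ} (hKT : K ≤ T)
    (hlow : ∀ i < K, dd i = 0) (hpat : ∀ i, T ≤ i → dd i = pat a T i) :
    HasSum (fun i : ℤ => (dd i : ℝ) * α ^ i)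
      ((∑ i ∈ Finset.Ico K T, (dd i : ℝ) * α ^ i) - α ^ T) := by
  set Ffin : ℤ → ℝ := fun i => if i < T then (dd i : ℝ) * α ^ i else 0 with hFf
  set Ftail : ℤ → ℝ := fun i => if T ≤ i then (dd i : ℝ) * α ^ i else 0 with hFt
  have hfin : HasSum Ffin (∑ i ∈ Finset.Ico K T, (dd i : ℝ) * α ^ i) := by
    have hsupp : ∀ i ∉ Finset.Ico K T, Ffin i = 0 := by
      intro i hi
      simp only [Finset.mem_Ico, not_and, not_lt] at hi
      by_cases h1 : i < T
      · simp [hFf, h1, hlow i (by by_contra h2; omega)]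
      · simp [hFf, h1]
    have := hasSum_sum_of_ne_finset_zero (L := SummationFilter.unconditional ℤ) hsupp
    convert this using 1
    apply Finset.sum_congr rfl
    intro i hi
    simp only [Finset.mem_Ico] at hi
    simp [hFf, hi.2]
  have htail : HasSum Ftail (-α ^ T) := by
    have hinj : Function.Injective (fun j : ℕ => T + (j : ℤ)) := fun x y hxy => by
      simpa using hxy
    have hzero : ∀ x ∉ Set.range (fun j : ℕ => T + (j : ℤ)), Ftail x = 0 := by
      intro x hx
      have : ¬ (T ≤ x) := by
        by_contra hc
        exact hx ⟨(x - T).toNat, by simp; omega⟩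
      simp [hFt, this]
    refine (Function.Injective.hasSum_iff hinj hzero).mp ?_
    have hc : (Ftail ∘ fun j : ℕ => T + (j : ℤ)) =
        (fun j : ℕ => (pat a T (T + j) : ℝ) * α ^ ((T : ℤ) + j)) := by
      funext j
      have h1 : T ≤ T + (j : ℤ) := by omega
      simp only [Function.comp, hFt, h1, if_true, hpat _ h1]
    rw [hc]
    exact patTail_hasSum h T
  have := hfin.add htail
  have he : (fun i : ℤ => Ffin i + Ftail i) = (fun i : ℤ => (dd i : ℝ) * α ^ i) := by
    funext i
    by_cases h1 : i < T
    · simp [hFf, hFt, h1, not_le.mpr h1]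
    · simp [hFf, hFt, h1, not_lt.mp h1]
  rw [he] at this
  simpa [sub_eq_add_neg] using this

end Pattern

section Dynamics

variable {a : ℕ} {β α : ℝ} {m n : ℤ}

/-- the three possible "states" of the tail dynamics -/
def P3 (a : ℕ) (z : ℤ × ℤ) : Prop := z = (-1, 0) ∨ z = ((a:ℤ) - 1, -1) ∨ z = ((a:ℤ), -1)

lemma region_pair (h : Good a β α) {P Q : ℤ}
    (h1 : -1 ≤ (P:ℝ) + Q * α) (h2 : (P:ℝ) + Q * α ≤ β)
    (h3 : (a:ℝ) - 1 - β - β⁻¹ ≤ (P:ℝ) + Q * β) (h4 : (P:ℝ) + Q * β < 0) :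
    P3 a (P, Q) := by
  have hβ1 := h.hβ1
  have hα0 := h.hα0
  have hαm1 := h.hαm1
  have ha1 := h.ha1
  have habs := h.absum
  have hβinv : (0:ℝ) < β⁻¹ := inv_pos.2 h.hβ0
  have hβα : 1 < β - α := by linarith
  have hαβinv : β - α = β + β⁻¹ := by rw [h.hαdef]; ring
  -- bounds on Q
  have hQ0 : Q ≤ 0 := by
    by_contra hc
    push_neg at hc
    have hq : (1:ℝ) ≤ (Q:ℝ) := by exact_mod_cast hc
    have := mul_le_mul_of_nonneg_right hq (by linarith : (0:ℝ) ≤ β - α)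
    nlinarith
  have hQ1 : -1 ≤ Q := by
    by_contra hc
    push_neg at hc
    have hq : (Q:ℝ) ≤ -2 := by exact_mod_cast (by omega : Q ≤ -2)
    have := mul_le_mul_of_nonneg_right hq (by linarith : (0:ℝ) ≤ β - α)
    rw [hαβinv] at this
    nlinarith
  interval_cases Q
  · -- Q = -1
    have e2 : (P:ℝ) + (-1:ℤ) * α ≤ β := h2
    have hPa : (P:ℝ) ≤ (a:ℝ) := by push_cast at e2 ⊢; linarith
    have hPa' : P ≤ (a:ℤ) := by exact_mod_cast hPa
    have hPlow : ((a:ℝ) - 2) < (P:ℝ) := by push_cast at h3 ⊢; linarith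
    have hPlow' : (a:ℤ) - 2 < P := by exact_mod_cast hPlow
    right
    rcases (by omega : P = (a:ℤ) - 1 ∨ P = (a:ℤ)) with hp | hp
    · left; rw [hp]
    · right; rw [hp]
  · -- Q = 0
    have hP0 : (P:ℝ) < 0 := by push_cast at h4 ⊢; linarith
    have hP1 : (-1:ℝ) ≤ (P:ℝ) := by push_cast at h1 ⊢; linarith
    have : P = -1 := by
      have l1 : P < 0 := by exact_mod_cast hP0
      have l2 : -1 ≤ P := by exact_mod_cast hP1
      omega
    left; rw [this]

lemma step_cases (ha : 0 < a) {z w : ℤ × ℤ} {dg : ℤ} (hz : P3 a z) (hw : P3 a w)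
    (hrec : w = pu a (z - (dg, 0))) (hd0 : 0 ≤ dg) (hda : dg ≤ (a:ℤ)) :
    (z = (-1, 0) ∧ dg = 0 ∧ w = ((a:ℤ), -1)) ∨
    (z = ((a:ℤ), -1) ∧ dg = (a:ℤ) ∧ w = (-1, 0)) ∨
    (z = ((a:ℤ) - 1, -1) ∧
      ((dg = (a:ℤ) - 1 ∧ w = (-1, 0)) ∨ (dg = (a:ℤ) ∧ w = ((a:ℤ) - 1, -1)))) := by
  have e1 : w.1 = z.2 - (a:ℤ) * (z.1 - dg) := by
    rw [hrec]; simp [pu]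
  have e2 : w.2 = z.1 - dg := by
    rw [hrec]; simp [pu]
  have haz : (0:ℤ) < (a:ℤ) := by exact_mod_cast ha
  rcases hz with hz | hz | hz <;> rcases hw with hw | hw | hw <;>
      rw [hz, hw] at e1 e2 <;> simp only [Prod.fst, Prod.snd] at e1 e2
  · exfalso; omega
  · exfalso
    have hdg : dg = 0 := by omega
    rw [hdg] at e1; ring_nf at e1; omega
  · have hdg : dg = 0 := by omega
    exact Or.inl ⟨hz, hdg, hw⟩
  · have hdg : dg = (a:ℤ) - 1 := by omega
    exact Or.inr (Or.inr ⟨hz, Or.inl ⟨hdg, hw⟩⟩)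
  · have hdg : dg = (a:ℤ) := by omega
    exact Or.inr (Or.inr ⟨hz, Or.inr ⟨hdg, hw⟩⟩)
  · exfalso
    have hdg : dg = (a:ℤ) := by omega
    rw [hdg] at e1; ring_nf at e1; omega
  · have hdg : dg = (a:ℤ) := by omega
    exact Or.inr (Or.inl ⟨hz, hdg, hw⟩)
  · exfalso; omega
  · exfalso; omega

end Dynamics

section Emergence

variable {a : ℕ} {β α : ℝ} {m n : ℤ}

lemma sβ_neg (h : Good a β α) (hx : (m:ℝ) + n * β < 0) (d : ℤ → ℤ)
    (hd : ∀ i, 0 ≤ d i) {k N : ℤ} (hk : k ≤ 0) (hN : k ≤ N) :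
    ev β (runZ a m n d k N) < 0 := by
  rw [ev_runZ h.root h.hβne d hk hN]
  apply mul_neg_of_pos_of_neg
  · exact zpow_pos h.hβ0 _
  · have hPS : (0:ℝ) ≤ ∑ i ∈ Finset.Ico k N, (d i : ℝ) * β ^ i := by
      apply Finset.sum_nonneg
      intro i _
      have h1 : (0:ℝ) ≤ (d i : ℝ) := by exact_mod_cast hd i
      have h2 : (0:ℝ) < β ^ i := zpow_pos h.hβ0 _
      positivity
    linarith

lemma sβ_low (h : Good a β α) (d : ℤ → ℤ) (hd : ∀ i, 0 ≤ d i ∧ d i ≤ (a:ℤ))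
    {k : ℤ} (hk : k ≤ 0) :
    ∀ N, k ≤ N → ((a:ℝ) - 1 - β) + ((m:ℝ) + n * β) * β ^ (-N) ≤ ev β (runZ a m n d k N) := by
  have hL0 : (a:ℝ) - 1 - β ≤ 0 := by
    have := h.haβ; linarith
  have key : ∀ j : ℕ, ((a:ℝ) - 1 - β) + ((m:ℝ) + n * β) * β ^ (-(k + j : ℤ)) ≤
      ev β (runZ a m n d k (k + j)) := by
    intro j
    induction j with
    | zero =>
      have : ev β (runZ a m n d k k) = β ^ (-k) * (((m:ℝ) + n * β) - 0) := by
        rw [ev_runZ h.root h.hβne d hk le_rfl]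
        simp
      push_cast
      rw [add_zero, this]
      rw [sub_zero]
      linarith [mul_comm (β ^ (-k)) ((m:ℝ) + n * β)]
    | succ j ih =>
      have hkj : k ≤ k + (j:ℤ) := by omega
      have hs : (k + (j + 1 : ℕ) : ℤ) = (k + (j : ℤ)) + 1 := by push_cast; ring
      rw [hs, runZ_succ d hkj, ev_pu h.root h.hβne, ev_sub_digit]
      have hda : (d (k + (j:ℤ)) : ℝ) ≤ (a:ℝ) := by exact_mod_cast (hd _).2
      have hstep : ((a:ℝ) - 1 - β) + ((m:ℝ) + n * β) * β ^ (-(k + (j:ℤ))) - (a:ℝ) ≤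
          ev β (runZ a m n d k (k + j)) - (d (k + (j:ℤ)) : ℝ) := by
        have := ih
        push_cast at this ⊢
        linarith
      have hβinv : (0:ℝ) ≤ β⁻¹ := (inv_pos.2 h.hβ0).le
      have := mul_le_mul_of_nonneg_left hstep hβinv
      have hid : β⁻¹ * (((a:ℝ) - 1 - β) + ((m:ℝ) + n * β) * β ^ (-(k + (j:ℤ))) - (a:ℝ)) =
          ((a:ℝ) - 1 - β) + ((m:ℝ) + n * β) * β ^ (-((k + (j:ℤ)) + 1)) := by
        have hz : β ^ (-((k + (j:ℤ)) + 1)) = β ^ (-(k + (j:ℤ))) * β⁻¹ := by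
          rw [show -((k + (j:ℤ)) + 1) = -(k + (j:ℤ)) + (-1) by ring, zpow_add₀ h.hβne,
            zpow_neg_one]
        have hLa : ((a:ℝ) - 1 - β) - (a:ℝ) = β * ((a:ℝ) - 1 - β) := by
          linear_combination h.root
        have hββ : β⁻¹ * β = 1 := inv_mul_cancel₀ h.hβne
        rw [hz]
        linear_combination β⁻¹ * hLa + ((a:ℝ) - 1 - β) * hββ
      rw [hid] at this
      exact this
  intro N hN
  have hNj : N = k + ((N - k).toNat : ℤ) := by omega
  rw [hNj]
  exact key (N - k).toNat

lemma region_eventually (h : Good a β α) (hx : (m:ℝ) + n * β < 0) (d : ℤ → ℤ)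
    (hd : ∀ i, 0 ≤ d i ∧ d i ≤ (a:ℤ)) {k : ℤ} (hk : k ≤ 0)
    (hsα : ∀ N, k ≤ N → -1 ≤ ev α (runZ a m n d k N) ∧ ev α (runZ a m n d k N) ≤ β) :
    ∃ N₂, k ≤ N₂ ∧ ∀ N, N₂ ≤ N → P3 a (runZ a m n d k N) := by
  set x : ℝ := (m:ℝ) + n * β with hxdef
  obtain ⟨t, ht⟩ := pow_unbounded_of_one_lt (-x) h.hβ1
  refine ⟨max k ((t:ℤ) + 1), le_max_left _ _, ?_⟩
  intro N hN
  have hkN : k ≤ N := le_trans (le_max_left _ _) hN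
  have htN : (t:ℤ) + 1 ≤ N := le_trans (le_max_right _ _) hN
  have h3 : (a:ℝ) - 1 - β - β⁻¹ ≤ ev β (runZ a m n d k N) := by
    have hlow := sβ_low (m := m) (n := n) h d hd hk N hkN
    have hxb : -β⁻¹ ≤ x * β ^ (-N) := by
      have h1 : -x ≤ β ^ (N - 1 : ℤ) := by
        calc -x ≤ β ^ t := ht.le
        _ = β ^ ((t:ℕ):ℤ) := by rw [zpow_natCast]
        _ ≤ β ^ (N - 1 : ℤ) := zpow_le_zpow_right₀ h.hβ1.le (by omega)
      have h2 : (0:ℝ) < β ^ (-N) := zpow_pos h.hβ0 _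
      have := mul_le_mul_of_nonneg_right h1 h2.le
      have he : β ^ (N - 1 : ℤ) * β ^ (-N) = β⁻¹ := by
        rw [← zpow_add₀ h.hβne, show (N - 1 : ℤ) + (-N) = -1 by ring, zpow_neg_one]
      rw [he] at this
      linarith
    linarith
  have h4 := sβ_neg h hx d (fun i => (hd i).1) hk hkN
  have h12 := hsα N hkN
  have hz : runZ a m n d k N = ((runZ a m n d k N).1, (runZ a m n d k N).2) := rfl
  rw [hz]
  exact region_pair h (by exact h12.1) (by exact h12.2) (by exact h3) (by exact h4)

lemma pattern_emerges (h : Good a β α) (hx : (m:ℝ) + n * β < 0) (d : ℤ → ℤ)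
    (hd : ∀ i, 0 ≤ d i ∧ d i ≤ (a:ℤ)) (hadm : ∀ i, d (i + 1) = (a:ℤ) → d i = 0)
    {k : ℤ} (hk : k ≤ 0)
    (hsα : ∀ N, k ≤ N → -1 ≤ ev α (runZ a m n d k N) ∧ ev α (runZ a m n d k N) ≤ β) :
    ∃ N₃, k ≤ N₃ ∧ runZ a m n d k N₃ = (-1, 0) ∧ ∀ i, N₃ ≤ i → d i = pat a N₃ i := by
  obtain ⟨N₂, hkN₂, hreg⟩ := region_eventually h hx d hd hk hsα
  have ha := h.ha
  have hstep : ∀ N, N₂ ≤ N → (runZ a m n d k N = (-1, 0) ∧ d N = 0 ∧ runZ a m n d k (N+1) = ((a:ℤ), -1)) ∨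
      (runZ a m n d k N = ((a:ℤ), -1) ∧ d N = (a:ℤ) ∧ runZ a m n d k (N+1) = (-1, 0)) ∨
      (runZ a m n d k N = ((a:ℤ) - 1, -1) ∧
        ((d N = (a:ℤ) - 1 ∧ runZ a m n d k (N+1) = (-1, 0)) ∨
         (d N = (a:ℤ) ∧ runZ a m n d k (N+1) = ((a:ℤ) - 1, -1)))) := by
    intro N hN
    exact step_cases ha (hreg N hN) (hreg (N+1) (by omega))
      (runZ_succ d (le_trans hkN₂ hN)) (hd N).1 (hd N).2
  -- not all states are the "c" state
  have hM : ∃ M, N₂ ≤ M ∧ runZ a m n d k M ≠ ((a:ℤ) - 1, -1) := by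
    by_contra hc
    push_neg at hc
    have hdig : ∀ N, N₂ ≤ N → d N = (a:ℤ) := by
      intro N hN
      rcases hstep N hN with ⟨hz, _, _⟩ | ⟨hz, _, _⟩ | ⟨_, ⟨_, hw⟩ | ⟨hdg, _⟩⟩
      · rw [hc N hN] at hz
        exfalso
        have := congrArg Prod.fst hz
        simp at this <;> omega
      · rw [hc N hN] at hz
        exfalso
        have := congrArg Prod.fst hz
        simp at this <;> omega
      · rw [hc (N+1) (by omega)] at hw
        exfalso
        have := congrArg Prod.snd hw
        simp at this
      · exact hdg
    have h1 := hdig (N₂ + 1) (by omega)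
    have h2 := hadm N₂ h1
    have h3 := hdig N₂ le_rfl
    omega
  obtain ⟨M, hMN₂, hMne⟩ := hM
  have hN₃ : ∃ N₃, N₂ ≤ N₃ ∧ runZ a m n d k N₃ = (-1, 0) := by
    rcases hreg M hMN₂ with hz | hz | hz
    · exact ⟨M, hMN₂, hz⟩
    · exact absurd hz hMne
    · rcases hstep M hMN₂ with ⟨h1, _, _⟩ | ⟨_, _, hw⟩ | ⟨h1, _⟩
      · rw [hz] at h1
        exfalso
        have := congrArg Prod.snd h1
        simp at this
      · exact ⟨M + 1, by omega, hw⟩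
      · rw [hz] at h1
        exfalso
        have := congrArg Prod.fst h1
        simp at this <;> omega
  obtain ⟨N₃, hN₃N₂, hN₃eq⟩ := hN₃
  have hpairs : ∀ j : ℕ, runZ a m n d k (N₃ + j) =
      (if j % 2 = 0 then ((-1:ℤ), (0:ℤ)) else ((a:ℤ), -1)) := by
    intro j
    induction j with
    | zero => simpa using hN₃eq
    | succ j ih =>
      have hNj : N₂ ≤ N₃ + (j:ℤ) := by omega
      have hc : (N₃ + ((j:ℕ)+1:ℕ) : ℤ) = (N₃ + (j:ℤ)) + 1 := by push_cast; ring
      rw [hc]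
      by_cases hj : j % 2 = 0
      · rw [if_neg (by omega)]
        rcases hstep (N₃ + (j:ℤ)) hNj with ⟨_, _, hw⟩ | ⟨hz, _, _⟩ | ⟨hz, _⟩
        · exact hw
        · rw [if_pos hj] at ih
          rw [ih] at hz
          exfalso
          have := congrArg Prod.snd hz
          simp at this
        · rw [if_pos hj] at ih
          rw [ih] at hz
          exfalso
          have := congrArg Prod.fst hz
          simp at this <;> omega
      · rw [if_pos (by omega)]
        rcases hstep (N₃ + (j:ℤ)) hNj with ⟨hz, _, _⟩ | ⟨_, _, hw⟩ | ⟨hz, _⟩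
        · rw [if_neg hj] at ih
          rw [ih] at hz
          exfalso
          have := congrArg Prod.fst hz
          simp at this <;> omega
        · exact hw
        · rw [if_neg hj] at ih
          rw [ih] at hz
          exfalso
          have := congrArg Prod.fst hz
          simp at this <;> omega
  have hdigits : ∀ j : ℕ, d (N₃ + j) = (if j % 2 = 0 then 0 else (a:ℤ)) := by
    intro j
    have hNj : N₂ ≤ N₃ + (j:ℤ) := by omega
    have hp1 := hpairs j
    have hp2 := hpairs (j + 1)
    have hc : (N₃ + ((j:ℕ)+1:ℕ) : ℤ) = (N₃ + (j:ℤ)) + 1 := by push_cast; ring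
    rw [hc] at hp2
    rcases hstep (N₃ + (j:ℤ)) hNj with ⟨hz, hdg, _⟩ | ⟨hz, hdg, _⟩ | ⟨hz, hrest⟩
    · by_cases hj : j % 2 = 0
      · rw [if_pos hj]; exact hdg
      · rw [if_neg hj] at hp1
        rw [hp1] at hz
        exfalso
        have := congrArg Prod.fst hz
        simp at this <;> omega
    · by_cases hj : j % 2 = 0
      · rw [if_pos hj] at hp1
        rw [hp1] at hz
        exfalso
        have := congrArg Prod.snd hz
        simp at this
      · rw [if_neg hj]; exact hdg
    · exfalso
      by_cases hj : j % 2 = 0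
      · rw [if_pos hj] at hp1
        rw [hp1] at hz
        have := congrArg Prod.fst hz
        simp at this <;> omega
      · rw [if_neg hj] at hp1
        rw [hp1] at hz
        have := congrArg Prod.fst hz
        simp at this <;> omega
  refine ⟨N₃, le_trans hkN₂ hN₃N₂, hN₃eq, ?_⟩
  intro i hi
  have hj : i = N₃ + ((i - N₃).toNat : ℤ) := by omega
  have := hdigits (i - N₃).toNat
  rw [← hj] at this
  rw [this]
  unfold pat
  by_cases hp : (i - N₃).toNat % 2 = 0
  · rw [if_pos hp, if_pos (by omega)]
  · rw [if_neg hp, if_neg (by omega)]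

end Emergence

section ExpansionMaster

variable {a : ℕ} {β α : ℝ} {m n : ℤ}

/-- `f` follows the periodic pattern `0a0a…` from `N` on. -/
def PatFrom (a : ℕ) (f : ℤ → ℤ) (N : ℤ) : Prop := ∀ i, N ≤ i → f i = pat a N i

lemma expansion_sα (h : Good a β α) {f : ℤ → ℤ} {k : ℤ}
    (hsum : HasSum (fun i : ℤ => (f i : ℝ) * α ^ i) ((m:ℝ) + n * α))
    (hlow : ∀ i < k, f i = 0) (hd : ∀ i, 0 ≤ f i ∧ f i ≤ (a:ℤ)) (hk : k ≤ 0) :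
    ∀ N, k ≤ N → -1 ≤ ev α (runZ a m n f k N) ∧ ev α (runZ a m n f k N) ≤ β := by
  intro N hN
  rw [ev_runZ h.αroot h.hαne f hk hN]
  exact sα_bounds h hsum hlow hd N

lemma expansion_master (h : Good a β α) (hx : (m:ℝ) + n * β < 0) {f : ℤ → ℤ}
    (hexp : IsAlphaAdicExpansion a α f ((m:ℝ) + n * α)) :
    ∃ k Nm : ℤ, k ≤ 0 ∧ k ≤ Nm - 2 ∧ (∀ i < k, f i = 0) ∧ PatFrom a f Nm ∧
      (∀ N, PatFrom a f N → Nm ≤ N) ∧ runZ a m n f k Nm = (-1, 0) := by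
  obtain ⟨hd, ⟨k₁', hk₁'⟩, hadm, hsum⟩ := hexp
  have ha := h.ha
  set k₁ : ℤ := min k₁' 0 with hk₁def
  have hk₁0 : k₁ ≤ 0 := min_le_right _ _
  have hlow₁ : ∀ i < k₁, f i = 0 := fun i hi => hk₁' i (by omega)
  -- existence of a pattern point
  obtain ⟨N₃, hkN₃, hpair₃, hpat₃⟩ :=
    pattern_emerges h hx f hd hadm hk₁0 (expansion_sα h hsum hlow₁ hd hk₁0)
  have hPF₃ : PatFrom a f N₃ := hpat₃
  -- minimal pattern point
  have hbdd : ∃ b : ℤ, ∀ N, PatFrom a f N → b ≤ N := by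
    refine ⟨k₁ - 1, fun N hN => ?_⟩
    by_contra hc
    push_neg at hc
    have h1 : f (N + 1) = pat a N (N + 1) := hN (N + 1) (by omega)
    have h2 : pat a N (N + 1) = (a:ℤ) := by
      unfold pat
      rw [if_neg (by omega)]
    have h3 : f (N + 1) = 0 := hlow₁ (N + 1) (by omega)
    omega
  obtain ⟨Nm, hNmpat, hNmmin⟩ := Int.exists_least_of_bdd
    (P := fun N => PatFrom a f N) hbdd ⟨N₃, hPF₃⟩
  -- re-choose k below Nm
  set k : ℤ := min k₁ (Nm - 2) with hkdef
  have hk0 : k ≤ 0 := le_trans (min_le_left _ _) hk₁0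
  have hlow : ∀ i < k, f i = 0 := fun i hi => hlow₁ i (by omega)
  have hkNm : k ≤ Nm - 2 := min_le_right _ _
  obtain ⟨N₃', hkN₃', hpair₃', hpat₃'⟩ :=
    pattern_emerges h hx f hd hadm hk0 (expansion_sα h hsum hlow hd hk0)
  have hNmN₃' : Nm ≤ N₃' := hNmmin N₃' hpat₃'
  -- parity between Nm and N₃'
  have hpar : (N₃' - Nm) % 2 = 0 := by
    have h1 : f N₃' = pat a Nm N₃' := hNmpat N₃' hNmN₃'
    have h2 : f N₃' = pat a N₃' N₃' := hpat₃' N₃' le_rfl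
    have h3 : pat a N₃' N₃' = 0 := by unfold pat; rw [if_pos (by omega)]
    unfold pat at h1
    by_contra hc
    rw [if_neg hc] at h1
    omega
  -- downward induction from N₃' to Nm
  have hdown : ∀ t : ℕ, (t:ℤ) ≤ N₃' - Nm →
      runZ a m n f k (N₃' - t) = (if t % 2 = 0 then ((-1:ℤ), (0:ℤ)) else ((a:ℤ), -1)) := by
    intro t
    induction t with
    | zero => intro _; simpa using hpair₃'
    | succ t ih =>
      intro hle
      have hih := ih (by push_cast at hle ⊢; omega)
      have hNlow : k ≤ N₃' - t - 1 := by
        have : Nm ≤ N₃' - (t:ℤ) - 1 := by push_cast at hle; omega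
        omega
      have hrec : runZ a m n f k (N₃' - t) = pu a (runZ a m n f k (N₃' - t - 1) - (f (N₃' - t - 1), 0)) := by
        have := runZ_succ (a := a) (m := m) (n := n) f hNlow
        rw [show N₃' - (t:ℤ) - 1 + 1 = N₃' - t by ring] at this
        exact this
      have hinv : runZ a m n f k (N₃' - t - 1) =
          pm a (runZ a m n f k (N₃' - t)) + (f (N₃' - t - 1), 0) := by
        rw [hrec, pm_pu]
        ext <;> simp
      have hfval : f (N₃' - t - 1) = (if (t+1) % 2 = 0 then 0 else (a:ℤ)) := by
        have h1 : f (N₃' - t - 1) = pat a Nm (N₃' - t - 1) := by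
          apply hNmpat
          push_cast at hle; omega
        unfold pat at h1
        by_cases hp : (t+1) % 2 = 0
        · rw [if_pos hp]
          rw [if_pos (by omega)] at h1
          exact h1
        · rw [if_neg hp]
          rw [if_neg (by omega)] at h1
          exact h1
      rw [show (N₃' - ((t:ℕ)+1:ℕ) : ℤ) = N₃' - (t:ℤ) - 1 by push_cast; ring]
      rw [hinv, hih, hfval]
      by_cases hp : t % 2 = 0
      · rw [if_pos hp, if_neg (by omega), if_neg (by omega)]
        unfold pm
        ext <;> simp
      · rw [if_neg hp, if_pos (by omega), if_pos (by omega)]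
        unfold pm
        ext <;> simp
  have hfinal := hdown (N₃' - Nm).toNat (by omega)
  rw [show N₃' - ((N₃' - Nm).toNat : ℤ) = Nm by omega] at hfinal
  rw [if_pos (by omega)] at hfinal
  exact ⟨k, Nm, hk0, hkNm, hlow, hNmpat, hNmmin, hfinal⟩

end ExpansionMaster

section Words

variable {a : ℕ} {β α : ℝ}

lemma word_lt (h : Good a β α) {w : ℤ → ℤ} {K : ℤ}
    (hd : ∀ i, 0 ≤ w i ∧ w i ≤ (a:ℤ)) (hadm : ∀ i, w (i + 1) = (a:ℤ) → w i = 0)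
    (hlow : ∀ i < K, w i = 0) :
    ∀ t : ℤ, ∑ i ∈ Finset.Ico K t, (w i : ℝ) * β ^ i < β ^ t := by
  have hβ0 := h.hβ0
  have haβ := h.haβ
  have main : ∀ dnat : ℕ, ∀ t : ℤ, (t - K).toNat ≤ dnat →
      ∑ i ∈ Finset.Ico K t, (w i : ℝ) * β ^ i < β ^ t := by
    intro dnat
    induction dnat using Nat.strong_induction_on with
    | _ dnat IH =>
      intro t ht
      by_cases h1 : t ≤ K
      · rw [Finset.Ico_eq_empty (by omega)]
        simp [zpow_pos hβ0 t]
      · push_neg at h1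
        by_cases h2 : t = K + 1
        · subst h2
          rw [show K + 1 = K + 1 by rfl]
          rw [sum_Ico_top (le_refl K)]
          rw [Finset.Ico_eq_empty (by omega), Finset.sum_empty, zero_add]
          have hwK : (w K : ℝ) ≤ (a : ℝ) := by exact_mod_cast (hd K).2
          have hp : (0:ℝ) < β ^ K := zpow_pos hβ0 _
          calc (w K : ℝ) * β ^ K ≤ (a:ℝ) * β ^ K :=
                mul_le_mul_of_nonneg_right hwK hp.le
            _ < β * β ^ K := mul_lt_mul_of_pos_right haβ hp
            _ = β ^ (K + 1 : ℤ) := by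
                rw [zpow_add₀ h.hβne, zpow_one]; ring
        · have h3 : K + 2 ≤ t := by omega
          by_cases hcase : w (t - 1) = (a:ℤ)
          · have hz : w (t - 2) = 0 := by
              have := hadm (t - 2)
              rw [show t - 2 + 1 = t - 1 by ring] at this
              exact this hcase
            have s1 := sum_Ico_top (F := fun i => (w i : ℝ) * β ^ i) (show K ≤ t - 1 by omega)
            rw [show t - 1 + 1 = t by ring] at s1
            have s2 := sum_Ico_top (F := fun i => (w i : ℝ) * β ^ i) (show K ≤ t - 2 by omega)
            rw [show t - 2 + 1 = t - 1 by ring] at s2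
            have hsplit : ∑ i ∈ Finset.Ico K t, (w i : ℝ) * β ^ i =
                (∑ i ∈ Finset.Ico K (t - 2), (w i : ℝ) * β ^ i) +
                  (w (t-2) : ℝ) * β ^ (t-2 : ℤ) + (w (t-1) : ℝ) * β ^ (t-1 : ℤ) := by
              rw [s1, s2]
            have hih := IH (dnat - 1) (by omega) (t - 2) (by omega)
            rw [hsplit, hz, hcase]
            push_cast
            rw [show (0:ℝ) * β ^ (t - 2:ℤ) = 0 by ring, add_zero]
            have he : β ^ (t:ℤ) = β ^ (t - 2 : ℤ) * β ^ 2 := by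
              have h0 := zpow_add₀ h.hβne (t - 2) ((2:ℕ):ℤ)
              rw [zpow_natCast] at h0
              rw [show t - 2 + ((2:ℕ):ℤ) = t by push_cast; ring] at h0
              exact h0
            rw [he, h.root]
            have hp : (0:ℝ) < β ^ (t - 1:ℤ) := zpow_pos hβ0 _
            have he2 : β ^ (t - 1 : ℤ) = β ^ (t - 2 : ℤ) * β := by
              have h0 := zpow_add₀ h.hβne (t - 2) 1
              rw [zpow_one] at h0
              rw [show t - 2 + 1 = t - 1 by ring] at h0
              exact h0
            rw [he2]
            nlinarith [hih]
          · have hle : w (t - 1) ≤ (a:ℤ) - 1 := by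
              have := (hd (t-1)).2
              omega
            have s1 := sum_Ico_top (F := fun i => (w i : ℝ) * β ^ i) (show K ≤ t - 1 by omega)
            rw [show t - 1 + 1 = t by ring] at s1
            have hsplit : ∑ i ∈ Finset.Ico K t, (w i : ℝ) * β ^ i =
                (∑ i ∈ Finset.Ico K (t - 1), (w i : ℝ) * β ^ i) + (w (t-1) : ℝ) * β ^ (t-1 : ℤ) := by
              rw [s1]
            have hih := IH (dnat - 1) (by omega) (t - 1) (by omega)
            rw [hsplit]
            have hwle : (w (t-1) : ℝ) ≤ (a:ℝ) - 1 := by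
              push_cast
              exact_mod_cast hle
            have hp : (0:ℝ) < β ^ (t - 1:ℤ) := zpow_pos hβ0 _
            have he2 : β ^ (t : ℤ) = β ^ (t - 1 : ℤ) * β := by
              have h0 := zpow_add₀ h.hβne (t - 1) 1
              rw [zpow_one] at h0
              rw [show t - 1 + 1 = t by ring] at h0
              exact h0
            rw [he2]
            nlinarith [hih]
  intro t
  exact main (t - K).toNat t le_rfl

lemma word_nonneg (h : Good a β α) {w : ℤ → ℤ} {K t : ℤ} (hd : ∀ i, 0 ≤ w i) :
    (0:ℝ) ≤ ∑ i ∈ Finset.Ico K t, (w i : ℝ) * β ^ i := by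
  apply Finset.sum_nonneg
  intro i _
  have h1 : (0:ℝ) ≤ (w i : ℝ) := by exact_mod_cast hd i
  have h2 : (0:ℝ) < β ^ i := zpow_pos h.hβ0 _
  positivity

lemma word_unique_aux (h : Good a β α) {w1 w2 : ℤ → ℤ} {K t : ℤ}
    (hd1 : ∀ i, 0 ≤ w1 i ∧ w1 i ≤ (a:ℤ))
    (hd2 : ∀ i, 0 ≤ w2 i ∧ w2 i ≤ (a:ℤ)) (hadm2 : ∀ i, w2 (i + 1) = (a:ℤ) → w2 i = 0)
    (hlow2 : ∀ i < K, w2 i = 0)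
    (hsum : (∑ i ∈ Finset.Ico K t, (w1 i : ℝ) * β ^ i) + (w1 t : ℝ) * β ^ t =
      (∑ i ∈ Finset.Ico K t, (w2 i : ℝ) * β ^ i) + (w2 t : ℝ) * β ^ t)
    (hgt : w2 t < w1 t) : False := by
  have h1 : (1:ℝ) ≤ (w1 t : ℝ) - (w2 t : ℝ) := by
    have : (1:ℤ) ≤ w1 t - w2 t := by omega
    push_cast
    exact_mod_cast this
  have hp : (0:ℝ) < β ^ t := zpow_pos h.hβ0 _
  have hws : ((w1 t : ℝ) - w2 t) * β ^ t =
      (∑ i ∈ Finset.Ico K t, (w2 i : ℝ) * β ^ i) - (∑ i ∈ Finset.Ico K t, (w1 i : ℝ) * β ^ i) := by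
    linarith
  have hlt := word_lt h hd2 hadm2 hlow2 t
  have hge := word_nonneg (t := t) (K := K) h (fun i => (hd1 i).1)
  nlinarith

end Words

section Policy

variable {a : ℕ} {β α : ℝ} {m n : ℤ}

noncomputable def polDigit (α : ℝ) (z : ℤ × ℤ) : ℤ := max 0 ⌈ev α z + α⌉

noncomputable def polRun (a : ℕ) (m n : ℤ) (α : ℝ) (k : ℤ) : ℕ → ℤ × ℤ
  | 0 => (pm a)^[(-k).toNat] (m, n)
  | j + 1 => pu a (polRun a m n α k j - (polDigit α (polRun a m n α k j), 0))

noncomputable def polD (a : ℕ) (m n : ℤ) (α : ℝ) (k : ℤ) : ℤ → ℤ := fun i =>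
  if i < k then 0 else polDigit α (polRun a m n α k (i - k).toNat)

lemma pol_run_eq (a : ℕ) (m n : ℤ) (α : ℝ) (k : ℤ) :
    ∀ j : ℕ, run a m n (polD a m n α k) k j = polRun a m n α k j := by
  intro j
  induction j with
  | zero => rfl
  | succ j ih =>
    show pu a (run a m n (polD a m n α k) k j - (polD a m n α k (k + j), 0)) = _
    have hd : polD a m n α k (k + j) = polDigit α (polRun a m n α k j) := by
      unfold polD
      rw [if_neg (by omega), show (k + (j:ℤ) - k).toNat = j by omega]
    rw [ih, hd]
    rfl

lemma pol_runZ_eq (a : ℕ) (m n : ℤ) (α : ℝ) (k : ℤ) {N : ℤ} (hN : k ≤ N) :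
    runZ a m n (polD a m n α k) k N = polRun a m n α k (N - k).toNat :=
  pol_run_eq a m n α k (N - k).toNat

/-- the key invariant of the greedy policy -/
lemma pol_invariant (h : Good a β α) {k : ℤ} (hk : k ≤ 0)
    (hbase : -1 ≤ ev α (polRun a m n α k 0) ∧ ev α (polRun a m n α k 0) ≤ β) :
    ∀ j : ℕ, -1 ≤ ev α (polRun a m n α k j) ∧ ev α (polRun a m n α k j) ≤ β := by
  intro j
  induction j with
  | zero => exact hbase
  | succ j ih =>
    set r := ev α (polRun a m n α k j) with hr
    set dj := polDigit α (polRun a m n α k j) with hdj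
    have hdjdef : dj = max 0 ⌈r + α⌉ := rfl
    have habs := h.absum
    have hα0 := h.hα0
    have hαm1 := h.hαm1
    -- dj ≥ r + α
    have hup : r + α ≤ (dj:ℝ) := by
      have h1 : (⌈r + α⌉ : ℝ) ≥ r + α := Int.le_ceil _
      have h2 : (dj:ℝ) ≥ (⌈r + α⌉:ℝ) := by
        have : (⌈r + α⌉ : ℤ) ≤ dj := le_max_right _ _
        exact_mod_cast this
      linarith
    -- dj < r + 1
    have hdn : (dj:ℝ) ≤ r + 1 := by
      rcases le_or_gt ⌈r + α⌉ 0 with hc | hc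
      · have hz : dj = 0 := by rw [hdjdef]; omega
        rw [hz]
        push_cast
        linarith [ih.1]
      · have heq : dj = ⌈r + α⌉ := by rw [hdjdef]; omega
        have h1 : (⌈r + α⌉ : ℝ) < (r + α) + 1 := Int.ceil_lt_add_one _
        rw [heq]
        linarith
    have hnext : ev α (polRun a m n α k (j+1)) = α⁻¹ * (r - dj) := by
      show ev α (pu a (polRun a m n α k j - (dj, 0))) = _
      rw [ev_pu h.αroot h.hαne, ev_sub_digit]
    have hαinv : α⁻¹ = -β := by
      rw [h.hαdef, inv_neg, inv_inv]
    rw [hnext, hαinv]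
    constructor
    · -- -1 ≤ -β(r - dj) ⟸ r - dj ≤ -α = β⁻¹... use: r - dj ≤ -α and -β·(-α) = -βα·? βα = -1: -β*(-α) = βα·? -β*(r-dj) ≥ -β*(-α) = αβ = -1
      have h1 : r - dj ≤ -α := by linarith
      have h2 : -β * (r - dj) ≥ -β * (-α) := by
        apply mul_le_mul_of_nonpos_left h1
        linarith [h.hβ0]
      have h3 : -β * (-α) = α * β := by ring
      rw [h3, h.hαβ] at h2
      linarith
    · have h1 : -1 ≤ r - dj := by linarith
      have h2 : -β * (r - dj) ≤ -β * (-1) := by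
        apply mul_le_mul_of_nonpos_left h1
        linarith [h.hβ0]
      linarith
  
lemma pol_adm (h : Good a β α) {k : ℤ} (hk : k ≤ 0)
    (hbase : -1 ≤ ev α (polRun a m n α k 0) ∧ ev α (polRun a m n α k 0) ≤ β) :
    ∀ j : ℕ, polDigit α (polRun a m n α k (j+1)) = (a:ℤ) →
      polDigit α (polRun a m n α k j) = 0 := by
  intro j hnext
  set r := ev α (polRun a m n α k j) with hr
  set dj := polDigit α (polRun a m n α k j) with hdj
  have hdjdef : dj = max 0 ⌈r + α⌉ := rfl
  by_contra hc
  have hdj0 : 0 ≤ dj := by rw [hdjdef]; omega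
  have hdj1 : 1 ≤ dj := by omega
  have heq : dj = ⌈r + α⌉ := by rw [hdjdef]; rw [hdjdef] at hdj1; omega
  have h1 : (⌈r + α⌉ : ℝ) < (r + α) + 1 := Int.ceil_lt_add_one _
  have h2 : (dj:ℝ) < r + α + 1 := by rw [heq]; exact h1
  -- r_{j+1} = α⁻¹ (r - dj) < β - 1
  have hnexteq : ev α (polRun a m n α k (j+1)) = α⁻¹ * (r - dj) := by
    show ev α (pu a (polRun a m n α k j - (dj, 0))) = _
    rw [ev_pu h.αroot h.hαne, ev_sub_digit]
  have hαinv : α⁻¹ = -β := by rw [h.hαdef, inv_neg, inv_inv]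
  have hlt : ev α (polRun a m n α k (j+1)) < β - 1 := by
    rw [hnexteq, hαinv]
    have h3 : r - dj > -1 - α := by linarith
    have h4 : -β * (r - dj) < -β * (-1 - α) := by
      apply mul_lt_mul_of_neg_left h3
      linarith [h.hβ0]
    have h5 : -β * (-1 - α) = β + α * β := by ring
    rw [h5, h.hαβ] at h4
    linarith
  -- but digit a at j+1 forces r_{j+1} > β - 1
  have hge : (a:ℝ) ≤ ev α (polRun a m n α k (j+1)) + α + 1 := by
    have h6 : (⌈ev α (polRun a m n α k (j+1)) + α⌉ : ℤ) = (a:ℤ) := by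
      have h7 : (0:ℤ) < (a:ℤ) := by exact_mod_cast h.ha
      have hnext' : max 0 ⌈ev α (polRun a m n α k (j+1)) + α⌉ = (a:ℤ) := hnext
      omega
    have h8 : ((a:ℤ):ℝ) < (ev α (polRun a m n α k (j+1)) + α) + 1 := by
      rw [← h6]
      exact Int.ceil_lt_add_one _
    push_cast at h8 ⊢
    linarith
  have habs := h.absum
  linarith

lemma exists_expansion (h : Good a β α) (hx : (m:ℝ) + n * β < 0) :
    ∃ f : ℤ → ℤ, IsAlphaAdicExpansion a α f ((m:ℝ) + n * α) := by
  -- choose k with |y| |α|^(-k) ≤ 1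
  set y : ℝ := (m:ℝ) + n * α with hydef
  have hαabs : |α| < 1 := by
    rw [abs_lt]
    exact ⟨h.hαm1, lt_trans h.hα0 one_pos⟩
  have hαabs0 : 0 ≤ |α| := abs_nonneg α
  obtain ⟨t, ht⟩ := exists_pow_lt_of_lt_one (show (0:ℝ) < 1/(|y|+1) by positivity) hαabs
  set k : ℤ := -(t:ℤ) with hkdef
  have hk : k ≤ 0 := by omega
  set d : ℤ → ℤ := polD a m n α k with hddef
  -- base invariant
  have hbase0 : ev α (polRun a m n α k 0) = α ^ (-k) * y := by
    show ev α ((pm a)^[(-k).toNat] (m, n)) = _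
    rw [ev_pm_iter h.αroot]
    have : ((-k).toNat : ℤ) = -k := by omega
    rw [← zpow_natCast α, this]
    rfl
  have hbase : -1 ≤ ev α (polRun a m n α k 0) ∧ ev α (polRun a m n α k 0) ≤ β := by
    have habs : |α ^ (-k) * y| ≤ 1 := by
      rw [abs_mul]
      have h1 : |α ^ (-k)| = |α| ^ t := by
        rw [show -k = ((t:ℕ):ℤ) by omega, zpow_natCast, abs_pow]
      rw [h1]
      have h4 : (0:ℝ) < |y| + 1 := by positivity
      have h5 : |α| ^ t * (|y| + 1) < 1 := by
        calc |α| ^ t * (|y| + 1) < (1/(|y|+1)) * (|y|+1) :=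
              mul_lt_mul_of_pos_right ht h4
          _ = 1 := by field_simp
      nlinarith [abs_nonneg y, pow_nonneg hαabs0 t]
    rw [hbase0]
    rw [abs_le] at habs
    constructor
    · linarith [habs.1]
    · linarith [habs.2, h.hβ1]
  have hinv := pol_invariant (m := m) (n := n) h hk hbase
  -- digit bounds
  have hd : ∀ i, 0 ≤ d i ∧ d i ≤ (a:ℤ) := by
    intro i
    rw [hddef]
    simp only [polD]
    by_cases hik : i < k
    · rw [if_pos hik]
      constructor
      · rfl
      · exact_mod_cast Nat.zero_le a
    · rw [if_neg hik]
      set j := (i - k).toNat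
      constructor
      · exact le_max_left _ _
      · have hr := hinv j
        unfold polDigit
        have h1 : ⌈ev α (polRun a m n α k j) + α⌉ ≤ (a:ℤ) := by
          apply Int.ceil_le.mpr
          push_cast
          linarith [hr.2, h.absum]
        have h2 : (0:ℤ) ≤ (a:ℤ) := by positivity
        omega
  -- admissibility
  have hadm : ∀ i, d (i + 1) = (a:ℤ) → d i = 0 := by
    intro i hi
    have ha0 : (0:ℤ) < (a:ℤ) := by exact_mod_cast h.ha
    rw [hddef] at hi ⊢
    simp only [polD] at hi ⊢
    by_cases hik : i + 1 < k
    · rw [if_pos hik] at hi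
      omega
    · by_cases hik2 : i < k
      · rw [if_pos hik2]
      · rw [if_neg hik] at hi
        rw [if_neg hik2]
        have hj : (i + 1 - k).toNat = (i - k).toNat + 1 := by omega
        rw [hj] at hi
        exact pol_adm h hk hbase (i - k).toNat hi
  -- the emerging pattern
  have hsα : ∀ N, k ≤ N → -1 ≤ ev α (runZ a m n d k N) ∧ ev α (runZ a m n d k N) ≤ β := by
    intro N hN
    rw [pol_runZ_eq a m n α k hN]
    exact hinv (N - k).toNat
  obtain ⟨N₃, hkN₃, hpair, hpat⟩ := pattern_emerges h hx d hd hadm hk hsα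
  have hlow : ∀ i < k, d i = 0 := by
    intro i hi
    rw [hddef]
    simp only [polD]
    rw [if_pos hi]
  -- value identity
  have hval := ev_runZ (m := m) (n := n) h.αroot h.hαne d hk hkN₃
  rw [hpair] at hval
  have hev : ev α ((-1 : ℤ), (0:ℤ)) = -1 := by simp [ev]
  rw [hev] at hval
  have hcan : α ^ (N₃:ℤ) * α ^ (-N₃) = 1 := by
    rw [← zpow_add₀ h.hαne]
    simp
  have hsum : HasSum (fun i : ℤ => (d i : ℝ) * α ^ i)
      ((∑ i ∈ Finset.Ico k N₃, (d i : ℝ) * α ^ i) - α ^ N₃) := by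
    exact build_hasSum h d hkN₃ hlow hpat
  have hveq : (∑ i ∈ Finset.Ico k N₃, (d i : ℝ) * α ^ i) - α ^ N₃ = y := by
    have h3 := congrArg (fun z => α ^ (N₃:ℤ) * z) hval
    simp only [← mul_assoc, hcan, one_mul, mul_neg_one] at h3
    linarith [h3]
  rw [hveq] at hsum
  exact ⟨d, hd, ⟨k, hlow⟩, hadm, hsum⟩

end Policy

section Counting

variable {a : ℕ} {β α : ℝ} {m n : ℤ}

lemma sum_Ico_split {F : ℤ → ℝ} {A B C : ℤ} (h1 : A ≤ B) (h2 : B ≤ C) :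
    ∑ i ∈ Finset.Ico A C, F i = (∑ i ∈ Finset.Ico A B, F i) + ∑ i ∈ Finset.Ico B C, F i := by
  rw [← Finset.Ico_union_Ico_eq_Ico h1 h2,
    Finset.sum_union (Finset.Ico_disjoint_Ico_consecutive A B C)]

lemma sum_extend_low {w : ℤ → ℤ} {γ : ℝ} {K k' T : ℤ} (hKk : K ≤ k')
    (hlow : ∀ i < k', w i = 0) :
    ∑ i ∈ Finset.Ico k' T, (w i : ℝ) * γ ^ i = ∑ i ∈ Finset.Ico K T, (w i : ℝ) * γ ^ i := by
  apply Finset.sum_subset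
  · intro i hi
    simp only [Finset.mem_Ico] at hi ⊢
    omega
  · intro i hi hni
    simp only [Finset.mem_Ico] at hi hni
    have : i < k' := by omega
    rw [hlow i this]
    simp

lemma scaled_eq {γ c S : ℝ} {N : ℤ} (hγ : γ ≠ 0) (hid : (-1 : ℝ) = γ ^ (-N) * (c - S)) :
    S = c + γ ^ N := by
  have hcan : γ ^ (N:ℤ) * γ ^ (-N) = 1 := by
    rw [← zpow_add₀ hγ]
    simp
  linear_combination γ ^ (N:ℤ) * hid + (c - S) * hcan

lemma PatFrom.shift {f : ℤ → ℤ} {N : ℤ} (ha : 0 < a) (hp : PatFrom a f N)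
    (h1 : f (N - 1) = (a:ℤ)) (h2 : f (N - 2) = 0) : PatFrom a f (N - 2) := by
  intro i hi
  unfold pat
  by_cases hc : N ≤ i
  · have h3 := hp i hc
    unfold pat at h3
    by_cases hpar : (i - N) % 2 = 0
    · rw [if_pos hpar] at h3
      rw [if_pos (by omega), h3]
    · rw [if_neg hpar] at h3
      rw [if_neg (by omega), h3]
  · by_cases hi2 : i = N - 2
    · rw [if_pos (by omega), hi2, h2]
    · have : i = N - 1 := by omega
      rw [if_neg (by omega), this, h1]

/-- complete analysis of an expansion -/
lemma master_value (h : Good a β α) (hx : (m:ℝ) + n * β < 0) {f : ℤ → ℤ}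
    (hexp : IsAlphaAdicExpansion a α f ((m:ℝ) + n * α)) :
    ∃ k Nm : ℤ, k ≤ 0 ∧ k ≤ Nm - 2 ∧ (∀ i < k, f i = 0) ∧ PatFrom a f Nm ∧
      (∀ N, PatFrom a f N → Nm ≤ N) ∧ f (Nm - 1) ≠ (a:ℤ) ∧
      (∑ i ∈ Finset.Ico k Nm, (f i : ℝ) * β ^ i) = ((m:ℝ) + n * β) + β ^ Nm ∧
      (∑ i ∈ Finset.Ico k Nm, (f i : ℝ) * α ^ i) = ((m:ℝ) + n * α) + α ^ Nm := by
  obtain ⟨k, Nm, hk0, hkNm, hlow, hpat, hmin, hpair⟩ := expansion_master h hx hexp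
  have hadm := hexp.2.2.1
  have htop : f (Nm - 1) ≠ (a:ℤ) := by
    intro hc
    have h2 : f (Nm - 2) = 0 := by
      have := hadm (Nm - 2)
      rw [show Nm - 2 + 1 = Nm - 1 by ring] at this
      exact this hc
    have := hmin (Nm - 2) (PatFrom.shift h.ha hpat hc h2)
    omega
  have hβval : (∑ i ∈ Finset.Ico k Nm, (f i : ℝ) * β ^ i) = ((m:ℝ) + n * β) + β ^ Nm := by
    have h1 := ev_runZ (m := m) (n := n) h.root h.hβne f hk0 (show k ≤ Nm by omega)
    rw [hpair] at h1
    have hev : ev β ((-1 : ℤ), (0:ℤ)) = -1 := by simp [ev]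
    rw [hev] at h1
    exact scaled_eq h.hβne h1
  have hαval : (∑ i ∈ Finset.Ico k Nm, (f i : ℝ) * α ^ i) = ((m:ℝ) + n * α) + α ^ Nm := by
    have h1 := ev_runZ (m := m) (n := n) h.αroot h.hαne f hk0 (show k ≤ Nm by omega)
    rw [hpair] at h1
    have hev : ev α ((-1 : ℤ), (0:ℤ)) = -1 := by simp [ev]
    rw [hev] at h1
    exact scaled_eq h.hαne h1
  exact ⟨k, Nm, hk0, hkNm, hlow, hpat, hmin, htop, hβval, hαval⟩

/-- the minimal pattern point is M₀ or M₀ + 1 -/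
lemma master_bracket (h : Good a β α) {f : ℤ → ℤ} {k Nm M₀ : ℤ}
    (hd : ∀ i, 0 ≤ f i ∧ f i ≤ (a:ℤ)) (hadm : ∀ i, f (i + 1) = (a:ℤ) → f i = 0)
    (hkNm : k ≤ Nm - 2) (hlow : ∀ i < k, f i = 0) (htop : f (Nm - 1) ≠ (a:ℤ))
    (hβval : (∑ i ∈ Finset.Ico k Nm, (f i : ℝ) * β ^ i) = ((m:ℝ) + n * β) + β ^ Nm)
    (hM₀ : 0 ≤ ((m:ℝ) + n * β) + β ^ M₀)
    (hM₀min : ∀ z : ℤ, 0 ≤ ((m:ℝ) + n * β) + β ^ z → M₀ ≤ z) :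
    Nm = M₀ ∨ Nm = M₀ + 1 := by
  have hge : M₀ ≤ Nm := by
    apply hM₀min
    rw [← hβval]
    exact word_nonneg h (fun i => (hd i).1)
  have hle : Nm ≤ M₀ + 1 := by
    -- split top digit
    have s1 := sum_Ico_top (F := fun i => (f i : ℝ) * β ^ i) (show k ≤ Nm - 1 by omega)
    rw [show Nm - 1 + 1 = Nm by ring] at s1
    have s1' : ∑ i ∈ Finset.Ico k Nm, (f i : ℝ) * β ^ i =
        (∑ i ∈ Finset.Ico k (Nm - 1), (f i : ℝ) * β ^ i) + (f (Nm-1) : ℝ) * β ^ (Nm - 1 : ℤ) := s1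
    have hwlt := word_lt h hd hadm hlow (Nm - 1)
    have htople : (f (Nm - 1) : ℝ) ≤ (a:ℝ) - 1 := by
      have h1 := (hd (Nm - 1)).2
      have : f (Nm - 1) ≤ (a:ℤ) - 1 := by omega
      push_cast
      exact_mod_cast this
    have hp : (0:ℝ) < β ^ (Nm - 1 : ℤ) := zpow_pos h.hβ0 _
    have hub : ((m:ℝ) + n * β) + β ^ Nm < (a:ℝ) * β ^ (Nm - 1 : ℤ) := by
      rw [← hβval, s1']
      nlinarith
    -- conclude  x + β^(Nm-2) < 0
    have he1 : β ^ (Nm : ℤ) = β ^ (Nm - 2 : ℤ) * β ^ 2 := by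
      have h0 := zpow_add₀ h.hβne (Nm - 2) ((2:ℕ):ℤ)
      rw [zpow_natCast] at h0
      rw [show Nm - 2 + ((2:ℕ):ℤ) = Nm by push_cast; ring] at h0
      exact h0
    have he2 : β ^ (Nm - 1 : ℤ) = β ^ (Nm - 2 : ℤ) * β := by
      have h0 := zpow_add₀ h.hβne (Nm - 2) 1
      rw [zpow_one] at h0
      rw [show Nm - 2 + 1 = Nm - 1 by ring] at h0
      exact h0
    have hp2 : (0:ℝ) < β ^ (Nm - 2 : ℤ) := zpow_pos h.hβ0 _
    have hneg : ((m:ℝ) + n * β) + β ^ (Nm - 2 : ℤ) < 0 := by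
      rw [he1] at hub
      rw [he2] at hub
      nlinarith [h.root]
    by_contra hc
    push_neg at hc
    have h2 : M₀ ≤ Nm - 2 := by omega
    have h3 : β ^ (M₀ : ℤ) ≤ β ^ (Nm - 2 : ℤ) := zpow_le_zpow_right₀ h.hβ1.le h2
    linarith
  omega

/-- two expansions with the same minimal pattern point are equal -/
lemma expansion_ext (h : Good a β α) {f g : ℤ → ℤ} {kf kg Nm : ℤ}
    (hdf : ∀ i, 0 ≤ f i ∧ f i ≤ (a:ℤ)) (hadmf : ∀ i, f (i + 1) = (a:ℤ) → f i = 0)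
    (hlowf : ∀ i < kf, f i = 0) (hpatf : PatFrom a f Nm)
    (hβvalf : (∑ i ∈ Finset.Ico kf Nm, (f i : ℝ) * β ^ i) = ((m:ℝ) + n * β) + β ^ Nm)
    (hdg : ∀ i, 0 ≤ g i ∧ g i ≤ (a:ℤ)) (hadmg : ∀ i, g (i + 1) = (a:ℤ) → g i = 0)
    (hlowg : ∀ i < kg, g i = 0) (hpatg : PatFrom a g Nm)
    (hβvalg : (∑ i ∈ Finset.Ico kg Nm, (g i : ℝ) * β ^ i) = ((m:ℝ) + n * β) + β ^ Nm) :
    f = g := by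
  set K : ℤ := min kf kg with hKdef
  have hlowf' : ∀ i < K, f i = 0 := fun i hi => hlowf i (by omega)
  have hlowg' : ∀ i < K, g i = 0 := fun i hi => hlowg i (by omega)
  have hvf : (∑ i ∈ Finset.Ico K Nm, (f i : ℝ) * β ^ i) = ((m:ℝ) + n * β) + β ^ Nm := by
    rw [← sum_extend_low (min_le_left kf kg) hlowf]
    exact hβvalf
  have hvg : (∑ i ∈ Finset.Ico K Nm, (g i : ℝ) * β ^ i) = ((m:ℝ) + n * β) + β ^ Nm := by
    rw [← sum_extend_low (min_le_right kf kg) hlowg]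
    exact hβvalg
  have hbelow : ∀ i, i < Nm → f i = g i := by
    by_contra hc
    push_neg at hc
    obtain ⟨i₀, hi₀N, hi₀ne⟩ := hc
    obtain ⟨t, ⟨htN, htne⟩, htmax⟩ := Int.exists_greatest_of_bdd
      (P := fun i => i < Nm ∧ f i ≠ g i) ⟨Nm, fun z hz => hz.1.le⟩ ⟨i₀, hi₀N, hi₀ne⟩
    have hKt : K ≤ t := by
      by_contra hc2
      push_neg at hc2
      exact htne (by rw [hlowf' t hc2, hlowg' t hc2])
    -- sums above t agree
    have hhigh : ∑ i ∈ Finset.Ico (t+1) Nm, (f i : ℝ) * β ^ i =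
        ∑ i ∈ Finset.Ico (t+1) Nm, (g i : ℝ) * β ^ i := by
      apply Finset.sum_congr rfl
      intro i hi
      simp only [Finset.mem_Ico] at hi
      have : f i = g i := by
        by_contra hne
        have := htmax i ⟨hi.2, hne⟩
        omega
      rw [this]
    have hlowsum : (∑ i ∈ Finset.Ico K (t+1), (f i : ℝ) * β ^ i) =
        ∑ i ∈ Finset.Ico K (t+1), (g i : ℝ) * β ^ i := by
      have heq := hvf.trans hvg.symm
      rw [sum_Ico_split (F := fun i => (f i : ℝ) * β ^ i)
        (show K ≤ t + 1 by omega) (show t + 1 ≤ Nm by omega)] at heq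
      rw [sum_Ico_split (F := fun i => (g i : ℝ) * β ^ i)
        (show K ≤ t + 1 by omega) (show t + 1 ≤ Nm by omega)] at heq
      linarith [hhigh]
    have stf := sum_Ico_top (F := fun i => (f i : ℝ) * β ^ i) (show K ≤ t by omega)
    have stg := sum_Ico_top (F := fun i => (g i : ℝ) * β ^ i) (show K ≤ t by omega)
    rw [stf, stg] at hlowsum
    rcases lt_trichotomy (f t) (g t) with hlt | heq | hgt
    · exact word_unique_aux h hdg hdf hadmf hlowf' hlowsum.symm hlt
    · exact htne heq
    · exact word_unique_aux h hdf hdg hadmg hlowg' hlowsum hgt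
  funext i
  by_cases hi : i < Nm
  · exact hbelow i hi
  · push_neg at hi
    rw [hpatf i hi, hpatg i hi]

end Counting

section Surgery

variable {a : ℕ} {β α : ℝ} {m n : ℤ}

lemma pat_bounds (a : ℕ) (T i : ℤ) : 0 ≤ pat a T i ∧ pat a T i ≤ (a:ℤ) := by
  unfold pat
  split <;> omega

lemma second_expansion (h : Good a β α) {f : ℤ → ℤ}
    (hd : ∀ i, 0 ≤ f i ∧ f i ≤ (a:ℤ)) (hadm : ∀ i, f (i + 1) = (a:ℤ) → f i = 0)
    {k Nm : ℤ} (hk0 : k ≤ 0) (hkNm : k ≤ Nm - 2) (hlow : ∀ i < k, f i = 0)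
    (hpat : PatFrom a f Nm) (htop : f (Nm - 1) ≠ (a:ℤ))
    (hαval : (∑ i ∈ Finset.Ico k Nm, (f i : ℝ) * α ^ i) = ((m:ℝ) + n * α) + α ^ Nm) :
    ∃ g : ℤ → ℤ, IsAlphaAdicExpansion a α g ((m:ℝ) + n * α) ∧ g ≠ f := by
  have ha := h.ha
  set e : ℤ := f (Nm - 1) with hedef
  set g0 : ℤ := f (Nm - 2) with hg0def
  have he : 0 ≤ e ∧ e ≤ (a:ℤ) - 1 := by
    have h1 := hd (Nm - 1)
    rw [hedef]
    omega
  have hg0b := hd (Nm - 2)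
  -- splittings of the α-value
  have hs1 : ∑ i ∈ Finset.Ico k Nm, (f i : ℝ) * α ^ i =
      (∑ i ∈ Finset.Ico k (Nm - 1), (f i : ℝ) * α ^ i) + (e : ℝ) * α ^ (Nm - 1 : ℤ) := by
    have s1 := sum_Ico_top (F := fun i => (f i : ℝ) * α ^ i) (show k ≤ Nm - 1 by omega)
    rw [show Nm - 1 + 1 = Nm by ring] at s1
    exact s1
  have hs2 : ∑ i ∈ Finset.Ico k (Nm - 1), (f i : ℝ) * α ^ i =
      (∑ i ∈ Finset.Ico k (Nm - 2), (f i : ℝ) * α ^ i) + (g0 : ℝ) * α ^ (Nm - 2 : ℤ) := by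
    have s2 := sum_Ico_top (F := fun i => (f i : ℝ) * α ^ i) (show k ≤ Nm - 2 by omega)
    rw [show Nm - 2 + 1 = Nm - 1 by ring] at s2
    exact s2
  have hsub1 : ∑ i ∈ Finset.Ico k (Nm - 1), (f i : ℝ) * α ^ i =
      ((m:ℝ) + n * α) + α ^ Nm - (e : ℝ) * α ^ (Nm - 1 : ℤ) := by
    rw [hs1] at hαval
    linarith
  have hsub2 : ∑ i ∈ Finset.Ico k (Nm - 2), (f i : ℝ) * α ^ i =
      ((m:ℝ) + n * α) + α ^ Nm - (e : ℝ) * α ^ (Nm - 1 : ℤ) - (g0 : ℝ) * α ^ (Nm - 2 : ℤ) := by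
    rw [hs2] at hsub1
    linarith
  -- zpow decompositions
  have d1 : α ^ (Nm : ℤ) = α ^ (Nm - 1 : ℤ) * α := by
    have h0 := zpow_add₀ h.hαne (Nm - 1) 1
    rw [zpow_one] at h0
    rw [show Nm - 1 + 1 = Nm by ring] at h0
    exact h0
  have d2 : α ^ (Nm + 1 : ℤ) = α ^ (Nm - 1 : ℤ) * α ^ 2 := by
    have h0 := zpow_add₀ h.hαne (Nm - 1) ((2:ℕ):ℤ)
    rw [zpow_natCast] at h0
    rw [show Nm - 1 + ((2:ℕ):ℤ) = Nm + 1 by push_cast; ring] at h0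
    exact h0
  have d3 : α ^ (Nm - 1 : ℤ) = α ^ (Nm - 2 : ℤ) * α := by
    have h0 := zpow_add₀ h.hαne (Nm - 2) 1
    rw [zpow_one] at h0
    rw [show Nm - 2 + 1 = Nm - 1 by ring] at h0
    exact h0
  have d4 : α ^ (Nm : ℤ) = α ^ (Nm - 2 : ℤ) * α ^ 2 := by
    have h0 := zpow_add₀ h.hαne (Nm - 2) ((2:ℕ):ℤ)
    rw [zpow_natCast] at h0
    rw [show Nm - 2 + ((2:ℕ):ℤ) = Nm by push_cast; ring] at h0
    exact h0
  by_cases hAB : e ≤ (a:ℤ) - 2 ∨ f (Nm - 2) = 0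
  · -- Case A
    set g : ℤ → ℤ := fun i => if i < Nm - 1 then f i else if i = Nm - 1 then e + 1
      else if i = Nm then (a:ℤ) - 1 else pat a (Nm + 1) i with hgdef
    have hgof : ∀ i, i < Nm - 1 → g i = f i := by
      intro i hi
      rw [hgdef]
      simp only
      rw [if_pos hi]
    have hg1 : g (Nm - 1) = e + 1 := by
      rw [hgdef]
      simp only
      rw [if_neg (by omega)]; simp
    have hg2 : g Nm = (a:ℤ) - 1 := by
      rw [hgdef]
      simp only
      rw [if_neg (by omega), if_neg (by omega)]; simp
    have hg3 : ∀ i, Nm + 1 ≤ i → g i = pat a (Nm + 1) i := by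
      intro i hi
      rw [hgdef]
      simp only
      rw [if_neg (by omega), if_neg (by omega), if_neg (by omega)]
    have hlowg : ∀ i < k, g i = 0 := by
      intro i hi
      rw [hgof i (by omega)]
      exact hlow i hi
    have hdg : ∀ i, 0 ≤ g i ∧ g i ≤ (a:ℤ) := by
      intro i
      by_cases h1 : i < Nm - 1
      · rw [hgof i h1]; exact hd i
      · by_cases h2 : i = Nm - 1
        · rw [h2, hg1]; omega
        · by_cases h3 : i = Nm
          · rw [h3, hg2]; omega
          · rw [hg3 i (by omega)]; exact pat_bounds a (Nm + 1) i
    have hadmg : ∀ i, g (i + 1) = (a:ℤ) → g i = 0 := by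
      intro i hi
      by_cases h1 : i + 1 < Nm - 1
      · rw [hgof _ h1] at hi
        rw [hgof i (by omega)]
        exact hadm i hi
      · by_cases h2 : i + 1 = Nm - 1
        · rw [h2, hg1] at hi
          have he1 : e = (a:ℤ) - 1 := by omega
          have hf2 : f (Nm - 2) = 0 := by
            rcases hAB with hc | hc
            · omega
            · exact hc
          rw [hgof i (by omega), show i = Nm - 2 by omega]
          exact hf2
        · by_cases h3 : i + 1 = Nm
          · rw [h3, hg2] at hi
            omega
          · by_cases h4 : i + 1 = Nm + 1
            · rw [h4] at hi
              rw [hg3 _ (by omega)] at hi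
              unfold pat at hi
              rw [if_pos (by omega)] at hi
              omega
            · -- i + 1 > Nm + 1
              rw [hg3 _ (by omega)] at hi
              unfold pat at hi
              have hpar : ¬ ((i + 1 - (Nm + 1)) % 2 = 0) := by
                by_contra hcc
                rw [if_pos hcc] at hi
                omega
              rw [hg3 i (by omega)]
              unfold pat
              rw [if_pos (by omega)]
    have hpatg : ∀ i, Nm + 1 ≤ i → g i = pat a (Nm + 1) i := hg3
    have hsum := build_hasSum h g (show k ≤ Nm + 1 by omega) hlowg hpatg
    have ht1 := sum_Ico_top (F := fun i => (g i : ℝ) * α ^ i) (show k ≤ Nm by omega)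
    have ht1' : ∑ i ∈ Finset.Ico k (Nm + 1), (g i : ℝ) * α ^ i =
        (∑ i ∈ Finset.Ico k Nm, (g i : ℝ) * α ^ i) + (g Nm : ℝ) * α ^ (Nm : ℤ) := ht1
    have ht2 := sum_Ico_top (F := fun i => (g i : ℝ) * α ^ i) (show k ≤ Nm - 1 by omega)
    rw [show Nm - 1 + 1 = Nm by ring] at ht2
    have ht2' : ∑ i ∈ Finset.Ico k Nm, (g i : ℝ) * α ^ i =
        (∑ i ∈ Finset.Ico k (Nm - 1), (g i : ℝ) * α ^ i) + (g (Nm - 1) : ℝ) * α ^ (Nm - 1 : ℤ) := ht2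
    have hgf : ∑ i ∈ Finset.Ico k (Nm - 1), (g i : ℝ) * α ^ i =
        ∑ i ∈ Finset.Ico k (Nm - 1), (f i : ℝ) * α ^ i := by
      apply Finset.sum_congr rfl
      intro i hi
      simp only [Finset.mem_Ico] at hi
      rw [hgof i hi.2]
    have hval : (∑ i ∈ Finset.Ico k (Nm + 1), (g i : ℝ) * α ^ i) - α ^ (Nm + 1 : ℤ) =
        ((m:ℝ) + n * α) := by
      rw [ht1', ht2', hgf, hsub1, hg1, hg2, d1, d2]
      push_cast
      linear_combination (-(α ^ (Nm - 1 : ℤ))) * h.αroot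
    rw [hval] at hsum
    refine ⟨g, ⟨hdg, ⟨k, hlowg⟩, hadmg, hsum⟩, ?_⟩
    intro hgeq
    have := congrFun hgeq (Nm - 1)
    rw [hg1] at this
    omega
  · -- Case B : e = a - 1 and f (Nm - 2) ≥ 1
    push_neg at hAB
    have he1 : e = (a:ℤ) - 1 := by omega
    have hg01 : 1 ≤ g0 := by
      rw [hg0def]
      have := hAB.2
      omega
    set g : ℤ → ℤ := fun i => if i < Nm - 2 then f i else if i = Nm - 2 then g0 - 1
      else pat a (Nm - 1) i with hgdef
    have hgof : ∀ i, i < Nm - 2 → g i = f i := by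
      intro i hi
      rw [hgdef]
      simp only
      rw [if_pos hi]
    have hg1 : g (Nm - 2) = g0 - 1 := by
      rw [hgdef]
      simp only
      rw [if_neg (by omega)]; simp
    have hg3 : ∀ i, Nm - 1 ≤ i → g i = pat a (Nm - 1) i := by
      intro i hi
      rw [hgdef]
      simp only
      rw [if_neg (by omega), if_neg (by omega)]
    have hlowg : ∀ i < k, g i = 0 := by
      intro i hi
      rw [hgof i (by omega)]
      exact hlow i hi
    have hdg : ∀ i, 0 ≤ g i ∧ g i ≤ (a:ℤ) := by
      intro i
      by_cases h1 : i < Nm - 2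
      · rw [hgof i h1]; exact hd i
      · by_cases h2 : i = Nm - 2
        · rw [h2, hg1]; omega
        · rw [hg3 i (by omega)]; exact pat_bounds a (Nm - 1) i
    have hadmg : ∀ i, g (i + 1) = (a:ℤ) → g i = 0 := by
      intro i hi
      by_cases h1 : i + 1 < Nm - 2
      · rw [hgof _ h1] at hi
        rw [hgof i (by omega)]
        exact hadm i hi
      · by_cases h2 : i + 1 = Nm - 2
        · rw [h2, hg1] at hi
          omega
        · by_cases h3 : i + 1 = Nm - 1
          · rw [hg3 _ (by omega)] at hi
            unfold pat at hi
            rw [if_pos (by omega)] at hi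
            omega
          · -- i + 1 ≥ Nm
            rw [hg3 _ (by omega)] at hi
            unfold pat at hi
            have hpar : ¬ ((i + 1 - (Nm - 1)) % 2 = 0) := by
              by_contra hcc
              rw [if_pos hcc] at hi
              omega
            rw [hg3 i (by omega)]
            unfold pat
            rw [if_pos (by omega)]
    have hsum := build_hasSum h g (show k ≤ Nm - 1 by omega) hlowg hg3
    have ht2 := sum_Ico_top (F := fun i => (g i : ℝ) * α ^ i) (show k ≤ Nm - 2 by omega)
    rw [show Nm - 2 + 1 = Nm - 1 by ring] at ht2
    have ht2' : ∑ i ∈ Finset.Ico k (Nm - 1), (g i : ℝ) * α ^ i =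
        (∑ i ∈ Finset.Ico k (Nm - 2), (g i : ℝ) * α ^ i) + (g (Nm - 2) : ℝ) * α ^ (Nm - 2 : ℤ) := ht2
    have hgf : ∑ i ∈ Finset.Ico k (Nm - 2), (g i : ℝ) * α ^ i =
        ∑ i ∈ Finset.Ico k (Nm - 2), (f i : ℝ) * α ^ i := by
      apply Finset.sum_congr rfl
      intro i hi
      simp only [Finset.mem_Ico] at hi
      rw [hgof i hi.2]
    have hval : (∑ i ∈ Finset.Ico k (Nm - 1), (g i : ℝ) * α ^ i) - α ^ (Nm - 1 : ℤ) =
        ((m:ℝ) + n * α) := by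
      rw [ht2', hgf, hsub2, hg1, he1, d3, d4]
      push_cast
      linear_combination (α ^ (Nm - 2 : ℤ)) * h.αroot
    rw [hval] at hsum
    refine ⟨g, ⟨hdg, ⟨k, hlowg⟩, hadmg, hsum⟩, ?_⟩
    intro hgeq
    have := congrFun hgeq (Nm - 2)
    rw [hg1] at this
    omega

end Surgery

end TwoExpAux

open TwoExpAux

/-- Let β be the positive root of x² - ax - 1 (a ∈ ℤ_{>0}) and
α = -β⁻¹.  If x = m + nβ ∈ ℤ[β] is negative, then its conjugate x' = m + nα has
exactly two weakly admissible α-adic expansions, and both are eventually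
periodic to the left with period word a0 (of the form ^ω(a0)u•v). -/
theorem two_expansions_of_negative (a : ℕ) (ha : 0 < a) (β α : ℝ)
    (hβroot : β ^ 2 = a * β + 1) (hβpos : 0 < β) (hα : α = -β⁻¹)
    (m n : ℤ) (hxneg : (m : ℝ) + n * β < 0) :
    {f : ℤ → ℤ | IsAlphaAdicExpansion a α f ((m : ℝ) + n * α)}.ncard = 2 ∧
    ∀ f : ℤ → ℤ, IsAlphaAdicExpansion a α f ((m : ℝ) + n * α) →
      ∃ N : ℤ, ∀ i, N ≤ i → f i = if (i - N) % 2 = 0 then 0 else a := by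
  have ha1 : (1:ℝ) ≤ (a:ℝ) := by exact_mod_cast ha
  have hβ1 : 1 < β := by
    have h1 : (1:ℝ) * β ≤ (a:ℝ) * β := mul_le_mul_of_nonneg_right ha1 hβpos.le
    nlinarith [hβroot, hβpos]
  have h : Good a β α := ⟨ha, hβroot, hβ1, hα⟩
  constructor
  · -- exactly two expansions
    -- M₀ : the least M with 0 ≤ x + β^M
    have hxpos : (0:ℝ) < -((m:ℝ) + n * β) := by linarith
    obtain ⟨t0, ht0⟩ := pow_unbounded_of_one_lt (-((m:ℝ) + n * β)) h.hβ1
    have hinh : ∃ M : ℤ, 0 ≤ ((m:ℝ) + n * β) + β ^ M := by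
      refine ⟨(t0:ℤ), ?_⟩
      rw [zpow_natCast]
      linarith
    obtain ⟨t1, ht1⟩ := pow_unbounded_of_one_lt ((-((m:ℝ) + n * β))⁻¹) h.hβ1
    have hbdd : ∃ b : ℤ, ∀ z : ℤ, 0 ≤ ((m:ℝ) + n * β) + β ^ z → b ≤ z := by
      refine ⟨-(t1:ℤ), fun z hz => ?_⟩
      by_contra hc
      push_neg at hc
      have h2 : (β ^ (t1:ℕ))⁻¹ < -((m:ℝ) + n * β) := by
        have := inv_strictAnti₀ (by positivity) ht1
        rwa [inv_inv] at this
      have h3 : β ^ (z:ℤ) ≤ β ^ (-(t1:ℤ)) := zpow_le_zpow_right₀ h.hβ1.le (by omega)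
      have h4 : β ^ (-(t1:ℤ)) = (β ^ (t1:ℕ))⁻¹ := by
        rw [zpow_neg, zpow_natCast]
      linarith [h3, h4 ▸ h3]
    obtain ⟨M₀, hM₀, hM₀min⟩ := Int.exists_least_of_bdd hbdd hinh
    -- first expansion
    obtain ⟨f1, hf1⟩ := exists_expansion h hxneg
    obtain ⟨k1, N1, hk1, hk1N, hlow1, hpat1, hmin1, htop1, hβval1, hαval1⟩ :=
      master_value h hxneg hf1
    have hbr1 := master_bracket h hf1.1 hf1.2.2.1 hk1N hlow1 htop1 hβval1 hM₀ hM₀min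
    -- second expansion
    obtain ⟨f2, hf2, hf2ne⟩ := second_expansion h hf1.1 hf1.2.2.1 hk1 hk1N hlow1 hpat1 htop1 hαval1
    obtain ⟨k2, N2, hk2, hk2N, hlow2, hpat2, hmin2, htop2, hβval2, hαval2⟩ :=
      master_value h hxneg hf2
    have hbr2 := master_bracket h hf2.1 hf2.2.2.1 hk2N hlow2 htop2 hβval2 hM₀ hM₀min
    have hN12 : N1 ≠ N2 := by
      intro he
      subst he
      exact hf2ne (expansion_ext h hf2.1 hf2.2.2.1 hlow2 hpat2 hβval2
        hf1.1 hf1.2.2.1 hlow1 hpat1 hβval1)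
    have hSeq : {f : ℤ → ℤ | IsAlphaAdicExpansion a α f ((m : ℝ) + n * α)} = {f1, f2} := by
      ext f0
      simp only [Set.mem_setOf_eq, Set.mem_insert_iff, Set.mem_singleton_iff]
      constructor
      · intro hf0
        obtain ⟨k0, N0, hk0, hk0N, hlow0, hpat0, hmin0, htop0, hβval0, hαval0⟩ :=
          master_value h hxneg hf0
        have hbr0 := master_bracket h hf0.1 hf0.2.2.1 hk0N hlow0 htop0 hβval0 hM₀ hM₀min
        have : N0 = N1 ∨ N0 = N2 := by omega
        rcases this with he | he
        · subst he
          left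
          exact expansion_ext h hf0.1 hf0.2.2.1 hlow0 hpat0 hβval0
            hf1.1 hf1.2.2.1 hlow1 hpat1 hβval1
        · subst he
          right
          exact expansion_ext h hf0.1 hf0.2.2.1 hlow0 hpat0 hβval0
            hf2.1 hf2.2.2.1 hlow2 hpat2 hβval2
      · rintro (rfl | rfl)
        · exact hf1
        · exact hf2
    rw [hSeq]
    exact Set.ncard_pair (Ne.symm hf2ne)
  · -- eventual periodicity
    intro f hf
    obtain ⟨k0, N0, _, _, _, hpat0, _⟩ := expansion_master h hxneg hf
    refine ⟨N0, fun i hi => ?_⟩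
    rw [hpat0 i hi]
    unfold pat
    split <;> simp
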